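/- Let r ≥ 1 and n ≥ 1 be integers, let W be a finite subgroup of GL_r(ℂ), and let d₁,…,d_r be positive integers with ∏_{i=1}^{r} d_i = |W|. In the field ℂ(X) of rational functions, define F = (∏_{i=1}^{r}(1−X^{2d_i})/|W|) · ∑_{w∈W} det(I+X·w)ⁿ / det(I−X²·w). Then F is regular at X = 1 and at X = −1 (i.e., the denominator of F in lowest terms does not vanish there), and F(1) = 2^{rn} while F(−1) = 0. -/

import Mathlib

open scoped BigOperators

/-- The rational function
`F = (∏_{i=1}^{r}(1 - X^{2 dᵢ})/|W|) · ∑_{w ∈ W} det(I + X w)ⁿ / det(I - X² w)` in `ℂ(X)`. -/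
noncomputable def poincareRatFunc (r n : ℕ)
    (W : Subgroup (Matrix.GeneralLinearGroup (Fin r) ℂ)) [Fintype W]
    (d : Fin r → ℕ) : RatFunc ℂ :=
  algebraMap (Polynomial ℂ) (RatFunc ℂ)
      (∏ i : Fin r, (1 - (Polynomial.X : Polynomial ℂ) ^ (2 * d i))) *
    RatFunc.C ((Fintype.card W : ℂ)⁻¹) *
    ∑ w : W,
      (algebraMap (Polynomial ℂ) (RatFunc ℂ)
          (Matrix.det (1 + (Polynomial.X : Polynomial ℂ) •
            ((w : Matrix.GeneralLinearGroup (Fin r) ℂ) :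
              Matrix (Fin r) (Fin r) ℂ).map Polynomial.C))) ^ n *
        (algebraMap (Polynomial ℂ) (RatFunc ℂ)
          (Matrix.det (1 - ((Polynomial.X : Polynomial ℂ)) ^ 2 •
            ((w : Matrix.GeneralLinearGroup (Fin r) ℂ) :
              Matrix (Fin r) (Fin r) ℂ).map Polynomial.C)))⁻¹


open Polynomial Matrix

theorem myEvalCharpoly {n : Type*} [DecidableEq n] [Fintype n] {R : Type*} [CommRing R]
    (M : Matrix n n R) (s : R) :
    M.charpoly.eval s = (Matrix.scalar n s - M).det := by
  rw [charpoly, eval_det, matPolyEquiv_charmatrix]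
  simp

theorem myDetFactorX {r : ℕ} (M : Matrix (Fin r) (Fin r) ℂ) :
    Matrix.det (1 + (X : ℂ[X]) • M.map C) =
      (M.charpoly.roots.map (fun l => 1 + C l * X)).prod := by
  have hsplit : M.charpoly.Splits := IsAlgClosed.splits _
  have hcard : M.charpoly.roots.card = r := by
    rw [splits_iff_card_roots.mp hsplit, charpoly_natDegree_eq_dim, Fintype.card_fin]
  have hfac : M.charpoly = (M.charpoly.roots.map (fun a => X - C a)).prod :=
    hsplit.eq_prod_roots_of_monic (charpoly_monic M)
  apply Polynomial.funext
  intro t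
  have hL : eval t (Matrix.det (1 + (X : ℂ[X]) • M.map C)) = Matrix.det (1 + t • M) := by
    rw [← coe_evalRingHom, RingHom.map_det]
    congr 1
    ext i j
    simp only [RingHom.mapMatrix_apply, Matrix.map_apply, Matrix.add_apply,
      Matrix.smul_apply, smul_eq_mul, coe_evalRingHom, eval_add, eval_mul, eval_X,
      eval_C, Matrix.one_apply, apply_ite (eval t), eval_one, eval_zero]
  have hR : eval t ((M.charpoly.roots.map (fun l => 1 + C l * X)).prod)
      = (M.charpoly.roots.map (fun l => 1 + l * t)).prod := by
    rw [← coe_evalRingHom, map_multiset_prod, Multiset.map_map]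
    simp
  rw [hL, hR]
  rcases eq_or_ne t 0 with rfl | ht
  · simp
  · have h1 : (1 : Matrix (Fin r) (Fin r) ℂ) + t • M
        = (-t) • (Matrix.scalar (Fin r) (-t⁻¹) - M) := by
      ext i j
      rcases eq_or_ne i j with rfl | hij
      · simp only [Matrix.add_apply, Matrix.one_apply_eq, Matrix.smul_apply,
          Matrix.sub_apply, scalar_apply, diagonal_apply_eq, smul_eq_mul]
        field_simp
        ring
      · simp [Matrix.one_apply, hij, diagonal_apply_ne _ hij]
    have h2 : (Matrix.scalar (Fin r) (-t⁻¹) - M).det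
        = (M.charpoly.roots.map (fun a => -t⁻¹ - a)).prod := by
      rw [← myEvalCharpoly]
      conv_lhs => rw [hfac]
      rw [← coe_evalRingHom, map_multiset_prod, Multiset.map_map]
      simp
    have h3 : (-t) ^ r = (M.charpoly.roots.map (fun _ => -t)).prod := by
      simp [Multiset.map_const', Multiset.prod_replicate, hcard]
    rw [h1, det_smul, Fintype.card_fin, h2, h3, ← Multiset.prod_map_mul]
    exact congrArg _ (Multiset.map_congr rfl (fun a _ => by field_simp; ring))

theorem myDetFactor {r : ℕ} (M : Matrix (Fin r) (Fin r) ℂ) (p : ℂ[X]) :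
    Matrix.det (1 + p • M.map C) =
      (M.charpoly.roots.map (fun l => 1 + C l * p)).prod := by
  have h := congrArg (aeval p : ℂ[X] →ₐ[ℂ] ℂ[X]) (myDetFactorX M)
  rw [AlgHom.map_det, map_multiset_prod, Multiset.map_map] at h
  convert h using 2
  · ext i j
    simp only [AlgHom.mapMatrix_apply, Matrix.map_apply, Matrix.add_apply,
      Matrix.smul_apply, smul_eq_mul, map_add, _root_.map_mul, aeval_X, aeval_C,
      Matrix.one_apply, apply_ite (aeval p), _root_.map_one, map_zero,
      Polynomial.algebraMap_eq, mul_comm]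
  · ext l
    simp [Polynomial.algebraMap_eq]

theorem myEqOne {r : ℕ} (hr : 1 ≤ r) (M : Matrix (Fin r) (Fin r) ℂ) {k : ℕ} (hk : k ≠ 0)
    (hMk : M ^ k = 1) (hroots : M.charpoly.roots.count 1 = r) : M = 1 := by
  haveI : Nonempty (Fin r) := ⟨⟨0, hr⟩⟩
  have hsplit : M.charpoly.Splits := IsAlgClosed.splits _
  have hcard : M.charpoly.roots.card = r := by
    rw [splits_iff_card_roots.mp hsplit, charpoly_natDegree_eq_dim, Fintype.card_fin]
  have hall : ∀ b ∈ M.charpoly.roots, (1 : ℂ) = b :=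
    Multiset.count_eq_card.mp (by rw [hroots, hcard])
  have hrep : M.charpoly.roots = Multiset.replicate r 1 := by
    have h := Multiset.eq_replicate_card.mpr (fun b hb => (hall b hb).symm)
    rwa [hcard] at h
  have hfac : M.charpoly = (X - C 1) ^ r := by
    conv_lhs => rw [hsplit.eq_prod_roots_of_monic (charpoly_monic M)]
    rw [hrep, Multiset.map_replicate, Multiset.prod_replicate]
  have hint : IsIntegral ℂ M := ⟨M.charpoly, charpoly_monic M, aeval_self_charpoly M⟩
  have hdvd1 : minpoly ℂ M ∣ (X - C 1) ^ r := by
    rw [← hfac]; exact minpoly.dvd ℂ M (aeval_self_charpoly M)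
  have hdvd2 : minpoly ℂ M ∣ X ^ k - 1 := by
    apply minpoly.dvd
    rw [map_sub, map_pow, aeval_X, _root_.map_one, hMk, sub_self]
  have hsqf : Squarefree (minpoly ℂ M) := by
    apply Squarefree.squarefree_of_dvd hdvd2
    have := (Polynomial.separable_X_pow_sub_C (1 : ℂ)
      (by exact_mod_cast (Nat.cast_ne_zero (R := ℂ)).mpr hk) one_ne_zero).squarefree
    rwa [_root_.map_one] at this
  obtain ⟨j, hjr, hassoc⟩ := (dvd_prime_pow (Polynomial.prime_X_sub_C (1 : ℂ)) r).mp hdvd1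
  have hmono : minpoly ℂ M = (X - C 1) ^ j :=
    Polynomial.eq_of_monic_of_associated (minpoly.monic hint)
      ((monic_X_sub_C (1 : ℂ)).pow j) hassoc
  have hj1 : j = 1 := by
    have hj0 : j ≠ 0 := by
      intro h
      have := minpoly.natDegree_pos hint
      rw [hmono, h, pow_zero, natDegree_one] at this
      omega
    by_contra hne
    have h2 : (X - C 1) * (X - C 1) ∣ minpoly ℂ M := by
      rw [hmono, ← sq]
      exact pow_dvd_pow _ (by omega)
    exact Polynomial.not_isUnit_X_sub_C (1 : ℂ) (hsqf _ h2)
  have h := minpoly.aeval ℂ M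
  rw [hmono, hj1, pow_one, map_sub, aeval_X] at h
  simpa [sub_eq_zero] using h

theorem myEvalAux {N Q : ℂ[X]} (hQ : Q ≠ 0) (a : ℂ) (hQa : Q.eval a ≠ 0)
    {F : RatFunc ℂ} (hF : F = algebraMap ℂ[X] (RatFunc ℂ) N / algebraMap ℂ[X] (RatFunc ℂ) Q) :
    (RatFunc.denom F).eval a ≠ 0 ∧
      RatFunc.eval (RingHom.id ℂ) a F = N.eval a / Q.eval a := by
  have hdvd : RatFunc.denom F ∣ Q := (RatFunc.denom_dvd hQ).mpr ⟨N, hF⟩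
  obtain ⟨u, hu⟩ := hdvd
  have hden : (RatFunc.denom F).eval a ≠ 0 := by
    intro h
    apply hQa
    rw [hu, eval_mul, h, zero_mul]
  refine ⟨hden, ?_⟩
  have h1 : (algebraMap ℂ[X] (RatFunc ℂ)) N / (algebraMap ℂ[X] (RatFunc ℂ)) Q
      = (algebraMap ℂ[X] (RatFunc ℂ)) (RatFunc.num F)
        / (algebraMap ℂ[X] (RatFunc ℂ)) (RatFunc.denom F) := by
    rw [RatFunc.num_div_denom, hF]
  rw [div_eq_div_iff (RatFunc.algebraMap_ne_zero hQ)
    (RatFunc.algebraMap_ne_zero (RatFunc.denom_ne_zero F)), ← _root_.map_mul,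
    ← _root_.map_mul] at h1
  have hcross := RatFunc.algebraMap_injective ℂ h1
  have h2 := congrArg (Polynomial.eval a) hcross
  rw [eval_mul, eval_mul] at h2
  have heval : RatFunc.eval (RingHom.id ℂ) a F
      = (RatFunc.num F).eval a / (RatFunc.denom F).eval a := rfl
  rw [heval]
  rw [div_eq_div_iff hden hQa]
  linear_combination -h2

noncomputable def myQ {r : ℕ} (M : Matrix (Fin r) (Fin r) ℂ) : ℂ[X] :=
  ((M.charpoly.roots.filter (fun l => ¬ l = 1)).map (fun l => 1 - C l * X ^ 2)).prod

noncomputable def myM {r : ℕ} (M : Matrix (Fin r) (Fin r) ℂ) : ℕ :=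
  M.charpoly.roots.count 1

theorem myDsplit {r : ℕ} (M : Matrix (Fin r) (Fin r) ℂ) :
    Matrix.det (1 - ((X : ℂ[X]) ^ 2) • M.map C)
      = (1 - X ^ 2) ^ myM M * myQ M := by
  have h0 : (1 : Matrix (Fin r) (Fin r) ℂ[X]) - ((X : ℂ[X]) ^ 2) • M.map C
      = 1 + (-(X ^ 2) : ℂ[X]) • M.map C := by
    rw [neg_smul, ← sub_eq_add_neg]
  rw [h0, myDetFactor]
  conv_lhs => rw [← Multiset.filter_add_not (fun l => l = 1) M.charpoly.roots]
  rw [Multiset.map_add, Multiset.prod_add, Multiset.filter_eq', Multiset.map_replicate,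
    Multiset.prod_replicate]
  congr 1
  · rw [myM]
    congr 1
    rw [Polynomial.C_1]
    ring
  · exact congrArg _ (Multiset.map_congr rfl (fun l _ => by ring))

theorem myQeval {r : ℕ} (M : Matrix (Fin r) (Fin r) ℂ) {a : ℂ} (ha : a ^ 2 = 1) :
    (myQ M).eval a ≠ 0 := by
  rw [myQ, ← coe_evalRingHom, map_multiset_prod, Multiset.map_map]
  apply Multiset.prod_ne_zero
  rw [Multiset.mem_map]
  rintro ⟨l, hl, hl0⟩
  have hl1 : ¬ l = 1 := (Multiset.mem_filter.mp hl).2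
  apply hl1
  simp only [Function.comp_apply, coe_evalRingHom, eval_sub, eval_one, eval_mul, eval_C,
    eval_pow, eval_X, ha, mul_one] at hl0
  have : l = 1 := by linear_combination -hl0
  exact this

theorem myQne {r : ℕ} (M : Matrix (Fin r) (Fin r) ℂ) : myQ M ≠ 0 := by
  intro h
  exact myQeval M (a := 1) (by ring) (by rw [h, eval_zero])

theorem myMle {r : ℕ} (M : Matrix (Fin r) (Fin r) ℂ) : myM M ≤ r := by
  refine le_trans (Multiset.count_le_card _ _) ?_
  refine le_trans (Polynomial.card_roots' _) ?_
  rw [charpoly_natDegree_eq_dim, Fintype.card_fin]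

theorem myCharpolyOne {r : ℕ} : (1 : Matrix (Fin r) (Fin r) ℂ).charpoly = (X - C 1) ^ r := by
  have h : charmatrix (1 : Matrix (Fin r) (Fin r) ℂ) = (X - C 1 : ℂ[X]) • 1 := by
    ext i j
    rcases eq_or_ne i j with rfl | hij
    · simp [charmatrix_apply, Matrix.one_apply_eq]
    · simp [charmatrix_apply, Matrix.one_apply_ne hij, hij]
  rw [Matrix.charpoly, h, det_smul, det_one, mul_one, Fintype.card_fin]

theorem myRootsOne {r : ℕ} :
    (1 : Matrix (Fin r) (Fin r) ℂ).charpoly.roots = Multiset.replicate r 1 := by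
  rw [myCharpolyOne, roots_pow, roots_X_sub_C, Multiset.nsmul_singleton]

theorem myMone {r : ℕ} : myM (1 : Matrix (Fin r) (Fin r) ℂ) = r := by
  rw [myM, myRootsOne, Multiset.count_replicate_self]

theorem myQone {r : ℕ} : myQ (1 : Matrix (Fin r) (Fin r) ℂ) = 1 := by
  rw [myQ, myRootsOne]
  have : (Multiset.replicate r (1:ℂ)).filter (fun l => ¬ l = 1) = 0 := by
    rw [Multiset.filter_eq_nil]
    intro a ha
    rw [Multiset.eq_of_mem_replicate ha]
    simp
  rw [this]
  simp

theorem myBeval {r : ℕ} (M : Matrix (Fin r) (Fin r) ℂ) (t : ℂ) :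
    eval t (Matrix.det (1 + (X : ℂ[X]) • M.map C)) = Matrix.det (1 + t • M) := by
  rw [← coe_evalRingHom, RingHom.map_det]
  congr 1
  ext i j
  simp only [RingHom.mapMatrix_apply, Matrix.map_apply, Matrix.add_apply,
    Matrix.smul_apply, smul_eq_mul, coe_evalRingHom, eval_add, eval_mul, eval_X,
    eval_C, Matrix.one_apply, apply_ite (eval t), eval_one, eval_zero]

theorem myAsplit {r : ℕ} (d : Fin r → ℕ) :
    (∏ i : Fin r, (1 - (X : ℂ[X]) ^ (2 * d i)))
      = (1 - X ^ 2) ^ r * ∏ i : Fin r, (∑ k ∈ Finset.range (d i), ((X : ℂ[X]) ^ 2) ^ k) := by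
  have h : ∀ i : Fin r, (1 - (X : ℂ[X]) ^ (2 * d i))
      = (1 - X ^ 2) * ∑ k ∈ Finset.range (d i), ((X : ℂ[X]) ^ 2) ^ k := by
    intro i
    have hg := geom_sum_mul ((X : ℂ[X]) ^ 2) (d i)
    rw [pow_mul]
    linear_combination hg
  rw [Finset.prod_congr rfl (fun i _ => h i), Finset.prod_mul_distrib,
    Finset.prod_const, Finset.card_univ, Fintype.card_fin]

theorem mySeval {r : ℕ} (d : Fin r → ℕ) {a : ℂ} (ha : a ^ 2 = 1) :
    Polynomial.eval a (∏ i : Fin r, (∑ k ∈ Finset.range (d i), ((X : ℂ[X]) ^ 2) ^ k))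
      = ((∏ i : Fin r, d i : ℕ) : ℂ) := by
  rw [Polynomial.eval_prod, Nat.cast_prod]
  apply Finset.prod_congr rfl
  intro i _
  rw [Polynomial.eval_finset_sum]
  simp [ha]

theorem my1x2ne : (1 - (X : ℂ[X]) ^ 2) ≠ 0 := by
  intro h
  have := congrArg (Polynomial.eval 0) h
  simp at this

theorem myFieldCalc {K : Type*} [Field K] (x q s b e k : K) (hx : x ≠ 0) (hq : q ≠ 0)
    {mm rr : ℕ} (h : mm ≤ rr) (nn : ℕ) :
    (x ^ rr * s) * k * (b ^ nn * (x ^ mm * q)⁻¹) * (q * e)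
      = k * (s * x ^ (rr - mm) * b ^ nn * e) := by
  rw [pow_sub₀ x hx h]
  field_simp
theorem myFieldCalc2 {K : Type*} [Field K] (x s k b q e : K) (hx : x ≠ 0) (hq : q ≠ 0)
    {mm rr : ℕ} (h : mm ≤ rr) (nn : ℕ) :
    x ^ rr * s * k * (b ^ nn * (x ^ mm * q)⁻¹ * (q * e))
      = s * x ^ (rr - mm) * b ^ nn * e * k := by
  rw [pow_sub₀ x hx h, mul_inv]
  have h1 : q⁻¹ * q = 1 := inv_mul_cancel₀ hq
  have h2 : (x ^ mm)⁻¹ * x ^ mm = 1 := inv_mul_cancel₀ (pow_ne_zero _ hx)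
  calc x ^ rr * s * k * (b ^ nn * ((x ^ mm)⁻¹ * q⁻¹) * (q * e))
      = (q⁻¹ * q) * (x ^ rr * (x ^ mm)⁻¹ * s * k * b ^ nn * e) := by ring
    _ = s * (x ^ rr * (x ^ mm)⁻¹) * b ^ nn * e * k := by rw [h1]; ring

theorem poincareRatFunc_eval_one_and_neg_one (r n : ℕ) (hr : 1 ≤ r) (hn : 1 ≤ n)
    (W : Subgroup (Matrix.GeneralLinearGroup (Fin r) ℂ)) [Fintype W]
    (d : Fin r → ℕ) (hd : ∀ i, 0 < d i)
    (hprod : ∏ i : Fin r, d i = Fintype.card W) :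
    Polynomial.eval 1 (RatFunc.denom (poincareRatFunc r n W d)) ≠ 0 ∧
    Polynomial.eval (-1) (RatFunc.denom (poincareRatFunc r n W d)) ≠ 0 ∧
    RatFunc.eval (RingHom.id ℂ) 1 (poincareRatFunc r n W d) = 2 ^ (r * n) ∧
    RatFunc.eval (RingHom.id ℂ) (-1) (poincareRatFunc r n W d) = 0 := by
  classical
  haveI : Nonempty (Fin r) := ⟨⟨0, hr⟩⟩
  set ι := algebraMap ℂ[X] (RatFunc ℂ) with hι
  set c : ℂ := (Fintype.card W : ℂ) with hc
  have hc0 : c ≠ 0 := Nat.cast_ne_zero.mpr Fintype.card_ne_zero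
  set Mw : W → Matrix (Fin r) (Fin r) ℂ :=
    fun w => ((w : Matrix.GeneralLinearGroup (Fin r) ℂ) : Matrix (Fin r) (Fin r) ℂ) with hMw
  set S : ℂ[X] := ∏ i : Fin r, (∑ k ∈ Finset.range (d i), ((X : ℂ[X]) ^ 2) ^ k) with hS
  set B : W → ℂ[X] := fun w => Matrix.det (1 + (X : ℂ[X]) • (Mw w).map C) with hB
  set Nw : W → ℂ[X] := fun w => S * (1 - X ^ 2) ^ (r - myM (Mw w)) * (B w) ^ n with hNw
  set QQ : ℂ[X] := ∏ w : W, myQ (Mw w) with hQQ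
  set NN : ℂ[X] :=
    Polynomial.C c⁻¹ * ∑ w : W, Nw w * ∏ v ∈ Finset.univ.erase w, myQ (Mw v) with hNN
  have hQQne : QQ ≠ 0 := Finset.prod_ne_zero_iff.mpr (fun w _ => myQne _)
  have hMw1 : Mw (1 : W) = 1 := by simp [hMw]
  have hMwk : ∀ w : W, (Mw w) ^ Fintype.card W = 1 := by
    intro w
    have h : w ^ Fintype.card W = 1 := pow_card_eq_one
    calc Mw w ^ Fintype.card W = Mw (w ^ Fintype.card W) := by
          rw [hMw]
          simp only [SubmonoidClass.coe_pow, Units.val_pow_eq_pow_val]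
      _ = Mw 1 := by rw [h]
      _ = 1 := hMw1
  have hmlt : ∀ w : W, w ≠ 1 → myM (Mw w) < r := by
    intro w hw
    rcases lt_or_eq_of_le (myMle (Mw w)) with h | h
    · exact h
    · exfalso
      have hM1 : Mw w = 1 :=
        myEqOne hr (Mw w) Fintype.card_ne_zero (hMwk w) h
      apply hw
      have hu : (w : Matrix.GeneralLinearGroup (Fin r) ℂ) = 1 := Units.ext hM1
      exact OneMemClass.coe_eq_one.mp hu
  -- the main identity
  have hFeq : poincareRatFunc r n W d = ι NN / ι QQ := by
    rw [eq_div_iff (RatFunc.algebraMap_ne_zero hQQne)]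
    rw [poincareRatFunc, myAsplit]
    have hterm : ∀ w : W,
        ι ((1 - X ^ 2) ^ r * S) * RatFunc.C c⁻¹ *
            ((ι (B w)) ^ n *
              (ι (Matrix.det (1 - ((X : ℂ[X])) ^ 2 • (Mw w).map C)))⁻¹ * ι QQ)
          = ι (Nw w * ∏ v ∈ Finset.univ.erase w, myQ (Mw v)) * RatFunc.C c⁻¹ := by
      intro w
      have hx : ι (1 - X ^ 2 : ℂ[X]) ≠ 0 := RatFunc.algebraMap_ne_zero my1x2ne
      have hq : ι (myQ (Mw w)) ≠ 0 := RatFunc.algebraMap_ne_zero (myQne (Mw w))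
      have he : ι (∏ v ∈ Finset.univ.erase w, myQ (Mw v)) ≠ 0 :=
        RatFunc.algebraMap_ne_zero (Finset.prod_ne_zero_iff.mpr (fun v _ => myQne _))
      rw [myDsplit (Mw w)]
      rw [hQQ, ← Finset.mul_prod_erase Finset.univ _ (Finset.mem_univ w)]
      rw [hNw]
      simp only [_root_.map_mul, map_pow]
      exact myFieldCalc2 _ _ _ _ _ _ hx hq (myMle (Mw w)) n
    calc ι ((1 - X ^ 2) ^ r * S) * RatFunc.C c⁻¹ *
          (∑ w : W, (ι (B w)) ^ n *
            (ι (Matrix.det (1 - ((X : ℂ[X])) ^ 2 • (Mw w).map C)))⁻¹) * ι QQ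
        = ∑ w : W, ι ((1 - X ^ 2) ^ r * S) * RatFunc.C c⁻¹ *
            ((ι (B w)) ^ n *
              (ι (Matrix.det (1 - ((X : ℂ[X])) ^ 2 • (Mw w).map C)))⁻¹ * ι QQ) := by
          rw [mul_assoc, Finset.sum_mul, Finset.mul_sum]
      _ = ∑ w : W, ι (Nw w * ∏ v ∈ Finset.univ.erase w, myQ (Mw v)) * RatFunc.C c⁻¹ :=
          Finset.sum_congr rfl (fun w _ => hterm w)
      _ = ι NN := by
          rw [hNN, ← Finset.sum_mul, _root_.map_mul, ← RatFunc.algebraMap_C (c⁻¹), map_sum]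
          ring
  have hQQev : ∀ a : ℂ, a ^ 2 = 1 → QQ.eval a ≠ 0 := by
    intro a ha
    rw [hQQ, Polynomial.eval_prod]
    exact Finset.prod_ne_zero_iff.mpr (fun w _ => myQeval _ ha)
  obtain ⟨hden1, hev1⟩ := myEvalAux hQQne 1 (hQQev 1 (by norm_num)) hFeq
  obtain ⟨hdenn1, hevn1⟩ := myEvalAux hQQne (-1) (hQQev (-1) (by norm_num)) hFeq
  have hSev : ∀ a : ℂ, a ^ 2 = 1 → S.eval a = c := by
    intro a ha
    rw [hS, mySeval d ha, hprod, hc]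
  have hB1 : (B (1 : W)).eval 1 = 2 ^ r := by
    rw [hB]
    simp only []
    rw [hMw1, myBeval]
    have h2 : (1 : Matrix (Fin r) (Fin r) ℂ) + (1 : ℂ) • (1 : Matrix (Fin r) (Fin r) ℂ)
        = (2 : ℂ) • 1 := by rw [one_smul, two_smul]
    rw [h2, det_smul, det_one, mul_one, Fintype.card_fin]
  have hBn1 : (B (1 : W)).eval (-1) = 0 := by
    rw [hB]
    simp only []
    rw [hMw1, myBeval]
    have h2 : (1 : Matrix (Fin r) (Fin r) ℂ) + (-1 : ℂ) • (1 : Matrix (Fin r) (Fin r) ℂ)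
        = 0 := by rw [neg_one_smul]; exact add_neg_cancel 1
    rw [h2, det_zero]
  refine ⟨hden1, hdenn1, ?_, ?_⟩
  · rw [hev1]
    have hNev : ∀ w : W, w ≠ 1 → (Nw w).eval 1 = 0 := by
      intro w hw
      rw [hNw]
      simp only [Polynomial.eval_mul, Polynomial.eval_pow, Polynomial.eval_sub,
        Polynomial.eval_one, Polynomial.eval_X]
      have : ((1 : ℂ) - 1 ^ 2) = 0 := by ring
      rw [this, zero_pow (Nat.sub_ne_zero_of_lt (hmlt w hw)), mul_zero, zero_mul]
    have hN1 : (Nw (1 : W)).eval 1 = c * 2 ^ (r * n) := by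
      rw [hNw]
      simp only [Polynomial.eval_mul, Polynomial.eval_pow, Polynomial.eval_sub,
        Polynomial.eval_one, Polynomial.eval_X]
      rw [hMw1, myMone, Nat.sub_self, pow_zero, mul_one, hSev 1 (by norm_num), hB1,
        ← pow_mul]
    have hsum : (∑ w : W, Nw w * ∏ v ∈ Finset.univ.erase w, myQ (Mw v)).eval 1
        = c * 2 ^ (r * n) * ∏ v ∈ Finset.univ.erase (1 : W), (myQ (Mw v)).eval 1 := by
      rw [Polynomial.eval_finset_sum]
      rw [Finset.sum_eq_single_of_mem (1 : W) (Finset.mem_univ _)]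
      · rw [Polynomial.eval_mul, hN1, Polynomial.eval_prod]
      · intro b _ hb
        rw [Polynomial.eval_mul, hNev b hb, zero_mul]
    have hQQ1 : QQ.eval 1 = ∏ v ∈ Finset.univ.erase (1 : W), (myQ (Mw v)).eval 1 := by
      rw [hQQ, Polynomial.eval_prod,
        ← Finset.mul_prod_erase Finset.univ _ (Finset.mem_univ (1 : W)),
        hMw1, myQone, Polynomial.eval_one, one_mul]
    have htne : (∏ v ∈ Finset.univ.erase (1 : W), (myQ (Mw v)).eval 1) ≠ 0 :=
      Finset.prod_ne_zero_iff.mpr (fun w _ => myQeval _ (by norm_num))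
    rw [hNN, Polynomial.eval_mul, Polynomial.eval_C, hsum, hQQ1]
    field_simp
  · rw [hevn1]
    have hNev : ∀ w : W, (Nw w).eval (-1) = 0 := by
      intro w
      rcases eq_or_ne w 1 with rfl | hw
      · rw [hNw]
        simp only [Polynomial.eval_mul, Polynomial.eval_pow]
        rw [hBn1, zero_pow (by omega), mul_zero]
      · rw [hNw]
        simp only [Polynomial.eval_mul, Polynomial.eval_pow, Polynomial.eval_sub,
          Polynomial.eval_one, Polynomial.eval_X]
        have : ((1 : ℂ) - (-1) ^ 2) = 0 := by ring
        rw [this, zero_pow (Nat.sub_ne_zero_of_lt (hmlt w hw)), mul_zero, zero_mul]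
    have hNNev : NN.eval (-1) = 0 := by
      rw [hNN, Polynomial.eval_mul, Polynomial.eval_finset_sum]
      have : ∀ w ∈ (Finset.univ : Finset W),
          (Nw w * ∏ v ∈ Finset.univ.erase w, myQ (Mw v)).eval (-1) = 0 := by
        intro w _
        rw [Polynomial.eval_mul, hNev w, zero_mul]
      rw [Finset.sum_congr rfl this, Finset.sum_const, smul_zero, mul_zero]
    rw [hNNev, zero_div]
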